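/- arXiv:2208.03487 — 2 statements merged into one kernel-verified Lean document; each statement's English description precedes it below -/
import Mathlib

section
/- Let u, v be bounded operators on ℓ² with polar-type decompositions vJ = A_v·√Λ and Ju = A_u·√(1+Λ), where Λ = vᵀv̄ = u*u - 1 is a nonnegative self-adjoint operator, √Λ and √(1+Λ) are defined by functional calculus, and A_v, A_u are antiunitary. Define O = -A_v·√(Λ/(4(1+Λ)))·A_u*. Then 2·O·J·u·φ = -v·J·φ for all φ ∈ ℓ². -/
set_option maxHeartbeats 1000000


noncomputable section

/-- The Hilbert space `ℓ²` of square-summable complex sequences. -/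
abbrev Hℓ2 : Type := lp (fun _ : ℕ => ℂ) 2

instance instCFCRealHℓ2 : ContinuousFunctionalCalculus ℝ (Hℓ2 →L[ℂ] Hℓ2) IsSelfAdjoint :=
  IsSelfAdjoint.instContinuousFunctionalCalculus

/-- Given polar-type decompositions `vJ = A_v √Λ` and `Ju = A_u √(1+Λ)` with
`Λ = vᵀv̄ = u*u - 1 ≥ 0` and antiunitary `A_v, A_u`, the operator
`O = -A_v √(Λ/(4(1+Λ))) A_u*` satisfies `2·O·J·u φ = -v·J φ` for all `φ`. -/
theorem stmt7 (u v Λ O : Hℓ2 →L[ℂ] Hℓ2) (J Au Av Bu : Hℓ2 → Hℓ2)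
    (hJ : ∀ (f : Hℓ2) (j : ℕ), J f j = starRingEnd ℂ (f j))
    (hΛsa : IsSelfAdjoint Λ) (hΛpos : (0 : Hℓ2 →L[ℂ] Hℓ2) ≤ Λ)
    (hΛ1 : ∀ φ : Hℓ2,
      Λ φ = J (ContinuousLinearMap.adjoint v (J (J (v (J φ))))))
    (hΛ2 : ∀ φ : Hℓ2, Λ φ = ContinuousLinearMap.adjoint u (u φ) - φ)
    -- `A_u` and `A_v` are antiunitary
    (hAuadd : ∀ φ ψ : Hℓ2, Au (φ + ψ) = Au φ + Au ψ)
    (hAusmul : ∀ (c : ℂ) (φ : Hℓ2), Au (c • φ) = starRingEnd ℂ c • Au φ)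
    (hAuinner : ∀ φ ψ : Hℓ2, (inner ℂ (Au φ) (Au ψ) : ℂ) = (inner ℂ ψ φ : ℂ))
    (hAusurj : Function.Surjective Au)
    (hAvadd : ∀ φ ψ : Hℓ2, Av (φ + ψ) = Av φ + Av ψ)
    (hAvsmul : ∀ (c : ℂ) (φ : Hℓ2), Av (c • φ) = starRingEnd ℂ c • Av φ)
    (hAvinner : ∀ φ ψ : Hℓ2, (inner ℂ (Av φ) (Av ψ) : ℂ) = (inner ℂ ψ φ : ℂ))
    (hAvsurj : Function.Surjective Av)
    -- `Bu = A_u*` is the adjoint (= inverse) of the antiunitary `A_u`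
    (hBu1 : ∀ φ : Hℓ2, Bu (Au φ) = φ) (hBu2 : ∀ φ : Hℓ2, Au (Bu φ) = φ)
    -- polar decompositions via the functional calculus of `Λ`
    (hv : ∀ φ : Hℓ2, v (J φ) = Av (cfc (fun l : ℝ => Real.sqrt l) Λ φ))
    (hu : ∀ φ : Hℓ2, J (u φ) = Au (cfc (fun l : ℝ => Real.sqrt (1 + l)) Λ φ))
    (hO : ∀ φ : Hℓ2,
      O φ = -(Av (cfc (fun l : ℝ => Real.sqrt (l / (4 * (1 + l)))) Λ (Bu φ)))) :
    ∀ φ : Hℓ2, (2 : ℂ) • O (J (u φ)) = -(v (J φ)) := by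
  intro φ
  have hspec : ∀ x ∈ spectrum ℝ Λ, (0:ℝ) ≤ x := fun x hx => spectrum_nonneg_of_nonneg hΛpos hx
  have hcont1 : ContinuousOn (fun l : ℝ => Real.sqrt (l / (4 * (1 + l)))) (spectrum ℝ Λ) := by
    apply Real.continuous_sqrt.comp_continuousOn
    apply ContinuousOn.div continuousOn_id (by fun_prop)
    intro x hx
    have := hspec x hx
    positivity
  have hcont2 : ContinuousOn (fun l : ℝ => Real.sqrt (1 + l)) (spectrum ℝ Λ) := by fun_prop
  have key : cfc (fun l : ℝ => Real.sqrt (l / (4 * (1 + l)))) Λ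
      (cfc (fun l : ℝ => Real.sqrt (1 + l)) Λ φ)
      = cfc (fun l : ℝ => Real.sqrt (l / (4 * (1 + l))) * Real.sqrt (1 + l)) Λ φ := by
    rw [cfc_mul _ _ Λ hcont1 hcont2]; rfl
  have hfun : cfc (fun l : ℝ => (2:ℝ) * (Real.sqrt (l / (4 * (1 + l))) * Real.sqrt (1 + l))) Λ
      = cfc (fun l : ℝ => Real.sqrt l) Λ := by
    apply cfc_congr
    intro x hx
    have hx0 := hspec x hx
    have h1 : (0:ℝ) < 1 + x := by linarith
    have : Real.sqrt (x / (4 * (1 + x))) = Real.sqrt x / (2 * Real.sqrt (1 + x)) := by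
      rw [Real.sqrt_div hx0, Real.sqrt_mul (by norm_num : (0:ℝ) ≤ 4),
        show Real.sqrt 4 = 2 by rw [show (4:ℝ) = 2^2 by norm_num, Real.sqrt_sq (by norm_num)]]
    simp only [this]
    field_simp
  have hsq : Real.sqrt (1+1) = Real.sqrt 2 := by norm_num
  calc (2 : ℂ) • O (J (u φ))
      = (2 : ℂ) • (-(Av (cfc (fun l : ℝ => Real.sqrt (l / (4 * (1 + l)))) Λ
        (Bu (Au (cfc (fun l : ℝ => Real.sqrt (1 + l)) Λ φ)))))) := by rw [hO, hu]
    _ = -((2 : ℂ) • Av (cfc (fun l : ℝ => Real.sqrt (l / (4 * (1 + l)))) Λ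
        (cfc (fun l : ℝ => Real.sqrt (1 + l)) Λ φ))) := by rw [hBu1, smul_neg]
    _ = -(Av ((2 : ℂ) • cfc (fun l : ℝ => Real.sqrt (l / (4 * (1 + l)))) Λ
        (cfc (fun l : ℝ => Real.sqrt (1 + l)) Λ φ))) := by
        rw [hAvsmul, show (starRingEnd ℂ) 2 = 2 from map_ofNat _ 2]
    _ = -(Av (cfc (fun l : ℝ => Real.sqrt l) Λ φ)) := by
        have h2 : ∀ x : Hℓ2, (2:ℂ) • x = (2:ℝ) • x := fun x => by
          rw [two_smul, two_smul]
        rw [key, h2, show ((2:ℝ) • cfc (fun l : ℝ => Real.sqrt (l / (4 * (1 + l))) * Real.sqrt (1 + l)) Λ φ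
            = ((2:ℝ) • cfc (fun l : ℝ => Real.sqrt (l / (4 * (1 + l))) * Real.sqrt (1 + l)) Λ) φ) from rfl,
          ← cfc_const_mul (2:ℝ) (fun l : ℝ => Real.sqrt (l / (4 * (1 + l))) * Real.sqrt (1 + l)) Λ (hcont1.mul hcont2), hfun]
    _ = -(v (J φ)) := by rw [hv]
end
end

section
/- Let O : ℓ² → ℓ² be a bounded operator and J the componentwise conjugation, and suppose (u*v)* = Ju*vJ holds for operators u, v with polar decompositions vJ = A_v√Λ, Ju = A_u√(1+Λ) and O = -A_v√(Λ/(4(1+Λ)))A_u*. Then J∘O* = O∘J, i.e., the adjoint of O is intertwined with O by the conjugation J. -/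
noncomputable section

local notation "⟪" x ", " y "⟫" => @inner ℂ _ _ x y

set_option maxHeartbeats 1000000 in
/-- Given polar-type decompositions `vJ = A_v √Λ` and `Ju = A_u √(1+Λ)` with
`Λ = vᵀv̄ = u*u - 1 ≥ 0` and antiunitary `A_v, A_u`, the operator
`O = -A_v √(Λ/(4(1+Λ))) A_u*`: if `(u*v)* = Ju*vJ`, then `J ∘ O* = O ∘ J`. -/
theorem stmt8 (u v Λ O : Hℓ2 →L[ℂ] Hℓ2) (J Au Av Bu : Hℓ2 → Hℓ2)
    (hJ : ∀ (f : Hℓ2) (j : ℕ), J f j = starRingEnd ℂ (f j))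
    (hΛsa : IsSelfAdjoint Λ) (hΛpos : (0 : Hℓ2 →L[ℂ] Hℓ2) ≤ Λ)
    (hΛ1 : ∀ φ : Hℓ2,
      Λ φ = J (ContinuousLinearMap.adjoint v (J (J (v (J φ))))))
    (hΛ2 : ∀ φ : Hℓ2, Λ φ = ContinuousLinearMap.adjoint u (u φ) - φ)
    -- `A_u` and `A_v` are antiunitary
    (hAuadd : ∀ φ ψ : Hℓ2, Au (φ + ψ) = Au φ + Au ψ)
    (hAusmul : ∀ (c : ℂ) (φ : Hℓ2), Au (c • φ) = starRingEnd ℂ c • Au φ)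
    (hAuinner : ∀ φ ψ : Hℓ2, (inner ℂ (Au φ) (Au ψ) : ℂ) = (inner ℂ ψ φ : ℂ))
    (hAusurj : Function.Surjective Au)
    (hAvadd : ∀ φ ψ : Hℓ2, Av (φ + ψ) = Av φ + Av ψ)
    (hAvsmul : ∀ (c : ℂ) (φ : Hℓ2), Av (c • φ) = starRingEnd ℂ c • Av φ)
    (hAvinner : ∀ φ ψ : Hℓ2, (inner ℂ (Av φ) (Av ψ) : ℂ) = (inner ℂ ψ φ : ℂ))
    (hAvsurj : Function.Surjective Av)
    -- `Bu = A_u*` is the adjoint (= inverse) of the antiunitary `A_u`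
    (hBu1 : ∀ φ : Hℓ2, Bu (Au φ) = φ) (hBu2 : ∀ φ : Hℓ2, Au (Bu φ) = φ)
    -- polar decompositions via the functional calculus of `Λ`
    (hv : ∀ φ : Hℓ2, v (J φ) = Av (cfc (fun l : ℝ => Real.sqrt l) Λ φ))
    (hu : ∀ φ : Hℓ2, J (u φ) = Au (cfc (fun l : ℝ => Real.sqrt (1 + l)) Λ φ))
    (hO : ∀ φ : Hℓ2,
      O φ = -(Av (cfc (fun l : ℝ => Real.sqrt (l / (4 * (1 + l)))) Λ (Bu φ))))
    -- `(u*v)* = J u*v J`, a consequence of the Bogoliubov relation `u*v - vᵀū = 0`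
    (hc : ∀ φ : Hℓ2,
      ContinuousLinearMap.adjoint v (u φ)
        = J (ContinuousLinearMap.adjoint u (v (J φ)))) :
    ∀ φ : Hℓ2, J (ContinuousLinearMap.adjoint O φ) = O (J φ) := by
  -- basic properties of the conjugation `J`
  have hJJ : ∀ x : Hℓ2, J (J x) = x := by
    intro x
    apply lp.ext
    funext j
    rw [hJ, hJ]
    exact Complex.conj_conj _
  have hinner_tsum : ∀ x y : Hℓ2, ⟪x, y⟫ = ∑' i, starRingEnd ℂ (x i) * y i :=
    fun _ _ => by rw [lp.inner_eq_tsum]; exact tsum_congr fun i => RCLike.inner_apply' _ _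
  have hJsym : ∀ x y : Hℓ2, ⟪x, J y⟫ = ⟪y, J x⟫ := by
    intro x y
    rw [hinner_tsum, hinner_tsum]
    exact tsum_congr fun i => by rw [hJ, hJ]; ring
  have hJsmul : ∀ (c : ℂ) (x : Hℓ2), J (c • x) = starRingEnd ℂ c • J x := by
    intro c x
    apply lp.ext
    funext j
    have h1 : (c • x) j = c * x j := rfl
    have h2 : (starRingEnd ℂ c • J x) j = starRingEnd ℂ c * J x j := rfl
    rw [hJ, h1, h2, hJ, map_mul]
  -- the inverse `Bv` of `Av`
  obtain ⟨Bv, hBv2⟩ : ∃ Bv : Hℓ2 → Hℓ2, ∀ x, Av (Bv x) = x :=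
    ⟨Function.surjInv hAvsurj, Function.surjInv_eq hAvsurj⟩
  have hAvinj : Function.Injective Av := by
    intro a b hab
    apply ext_inner_right ℂ
    intro z
    have ha := hAvinner z a
    rw [hab] at ha
    rw [← ha, hAvinner z b]
  have hBv1 : ∀ x, Bv (Av x) = x := fun x => hAvinj (hBv2 (Av x))
  -- inner-product moves for the antiunitaries
  have m1 : ∀ x w : Hℓ2, ⟪Av x, w⟫ = ⟪Bv w, x⟫ := by
    intro x w
    conv_lhs => rw [← hBv2 w]
    exact hAvinner x (Bv w)
  have m2 : ∀ w x : Hℓ2, ⟪w, Av x⟫ = ⟪x, Bv w⟫ := by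
    intro w x
    have h := congrArg (starRingEnd ℂ) (m1 x w)
    rwa [inner_conj_symm, inner_conj_symm] at h
  have m3 : ∀ x w : Hℓ2, ⟪Au x, w⟫ = ⟪Bu w, x⟫ := by
    intro x w
    conv_lhs => rw [← hBu2 w]
    exact hAuinner x (Bu w)
  have hBvsmul : ∀ (c : ℂ) (z : Hℓ2), Bv (c • z) = starRingEnd ℂ c • Bv z := by
    intro c z
    apply hAvinj
    rw [hBv2, hAvsmul, hBv2, Complex.conj_conj]
  have hDsmul2 : ∀ x : Hℓ2,
      Bv (J (Au ((2:ℂ) • x))) = (2:ℂ) • Bv (J (Au x)) := by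
    intro x
    rw [hAusmul, hJsmul, hBvsmul, Complex.conj_conj, Complex.conj_ofNat]
  -- the transpose relation between `D = Bv J Au` and `C = Bu J Av`
  have m5 : ∀ p q : Hℓ2, ⟪Bv (J (Au p)), q⟫ = ⟪Bu (J (Av q)), p⟫ := by
    intro p q
    calc ⟪Bv (J (Au p)), q⟫ = ⟪Av q, J (Au p)⟫ := (m1 q (J (Au p))).symm
      _ = ⟪Au p, J (Av q)⟫ := hJsym (Av q) (Au p)
      _ = ⟪Bu (J (Av q)), p⟫ := m3 p (J (Av q))
  have hDC : ∀ x : Hℓ2, Bv (J (Au (Bu (J (Av x))))) = x := by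
    intro x; rw [hBu2, hJJ, hBv1]
  -- functional calculus: abbreviations
  set S1 : Hℓ2 →L[ℂ] Hℓ2 := cfc (fun l : ℝ => Real.sqrt l) Λ with hS1def
  set S2 : Hℓ2 →L[ℂ] Hℓ2 := cfc (fun l : ℝ => Real.sqrt (1 + l)) Λ with hS2def
  set G : Hℓ2 →L[ℂ] Hℓ2 :=
    cfc (fun l : ℝ => Real.sqrt (l / (4 * (1 + l)))) Λ with hGdef
  set T : Hℓ2 →L[ℂ] Hℓ2 :=
    cfc (fun l : ℝ => (Real.sqrt (1 + l))⁻¹) Λ with hTdef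
  set M : Hℓ2 →L[ℂ] Hℓ2 :=
    cfc (fun l : ℝ => Real.sqrt l * (Real.sqrt (1 + l))⁻¹) Λ with hMdef
  have hspec : ∀ l ∈ spectrum ℝ Λ, (0:ℝ) ≤ l :=
    fun l hl => spectrum_nonneg_of_nonneg hΛpos hl
  have hc_sq : ContinuousOn (fun l : ℝ => Real.sqrt l) (spectrum ℝ Λ) :=
    Real.continuous_sqrt.continuousOn
  have hc_sq1 : ContinuousOn (fun l : ℝ => Real.sqrt (1 + l)) (spectrum ℝ Λ) :=
    (Real.continuous_sqrt.comp (continuous_const.add continuous_id)).continuousOn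
  have hsq1_ne : ∀ l ∈ spectrum ℝ Λ, Real.sqrt (1 + l) ≠ 0 := by
    intro l hl
    have := hspec l hl
    exact ne_of_gt (Real.sqrt_pos.mpr (by linarith))
  have hc_inv : ContinuousOn (fun l : ℝ => (Real.sqrt (1 + l))⁻¹) (spectrum ℝ Λ) :=
    ContinuousOn.inv₀ hc_sq1 hsq1_ne
  have hc_m : ContinuousOn (fun l : ℝ => Real.sqrt l * (Real.sqrt (1 + l))⁻¹)
      (spectrum ℝ Λ) := hc_sq.mul hc_inv
  have hc_g : ContinuousOn (fun l : ℝ => Real.sqrt (l / (4 * (1 + l))))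
      (spectrum ℝ Λ) := by
    apply Real.continuous_sqrt.comp_continuousOn
    apply ContinuousOn.div continuousOn_id (by fun_prop)
    intro l hl
    have := hspec l hl
    positivity
  have hS1sa : IsSelfAdjoint S1 := cfc_predicate (fun l : ℝ => Real.sqrt l) Λ
  have hS2sa : IsSelfAdjoint S2 := cfc_predicate (fun l : ℝ => Real.sqrt (1 + l)) Λ
  have hGsa : IsSelfAdjoint G :=
    cfc_predicate (fun l : ℝ => Real.sqrt (l / (4 * (1 + l)))) Λ
  have hMsa : IsSelfAdjoint M :=
    cfc_predicate (fun l : ℝ => Real.sqrt l * (Real.sqrt (1 + l))⁻¹) Λ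
  have sa_move : ∀ (Tq : Hℓ2 →L[ℂ] Hℓ2), IsSelfAdjoint Tq →
      ∀ x y : Hℓ2, ⟪Tq x, y⟫ = ⟪x, Tq y⟫ := by
    intro Tq hTq x y
    nth_rewrite 1 [← ContinuousLinearMap.isSelfAdjoint_iff'.mp hTq]
    exact ContinuousLinearMap.adjoint_inner_left _ _ _
  -- algebraic identities from the functional calculus
  have eS2T : S2 * T = 1 := by
    rw [hS2def, hTdef, ← cfc_mul _ _ Λ hc_sq1 hc_inv]
    calc cfc (fun l : ℝ => Real.sqrt (1 + l) * (Real.sqrt (1 + l))⁻¹) Λ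
        = cfc (fun _ : ℝ => (1:ℝ)) Λ :=
          cfc_congr fun l hl => mul_inv_cancel₀ (hsq1_ne l hl)
      _ = 1 := by rw [cfc_const 1 Λ hΛsa, map_one]
  have eTS2 : T * S2 = 1 := by
    rw [hS2def, hTdef, ← cfc_mul _ _ Λ hc_inv hc_sq1]
    calc cfc (fun l : ℝ => (Real.sqrt (1 + l))⁻¹ * Real.sqrt (1 + l)) Λ
        = cfc (fun _ : ℝ => (1:ℝ)) Λ :=
          cfc_congr fun l hl => inv_mul_cancel₀ (hsq1_ne l hl)
      _ = 1 := by rw [cfc_const 1 Λ hΛsa, map_one]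
  have eS1T : S1 * T = M := by
    rw [hS1def, hTdef, hMdef, ← cfc_mul _ _ Λ hc_sq hc_inv]
  have eTS1 : T * S1 = M := by
    rw [hS1def, hTdef, hMdef, ← cfc_mul _ _ Λ hc_inv hc_sq]
    exact cfc_congr fun l _ => mul_comm _ _
  have hS2T : ∀ x : Hℓ2, S2 (T x) = x := by
    intro x
    calc S2 (T x) = (S2 * T) x := (ContinuousLinearMap.mul_apply _ _ _).symm
      _ = x := by rw [eS2T]; exact ContinuousLinearMap.one_apply x
  have hTS2 : ∀ x : Hℓ2, T (S2 x) = x := by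
    intro x
    calc T (S2 x) = (T * S2) x := (ContinuousLinearMap.mul_apply _ _ _).symm
      _ = x := by rw [eTS2]; exact ContinuousLinearMap.one_apply x
  have hS1T : ∀ x : Hℓ2, S1 (T x) = M x := by
    intro x
    calc S1 (T x) = (S1 * T) x := (ContinuousLinearMap.mul_apply _ _ _).symm
      _ = M x := by rw [eS1T]
  have hTS1 : ∀ x : Hℓ2, T (S1 x) = M x := by
    intro x
    calc T (S1 x) = (T * S1) x := (ContinuousLinearMap.mul_apply _ _ _).symm
      _ = M x := by rw [eTS1]
  have hMG : ∀ x : Hℓ2, M x = (2:ℂ) • G x := by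
    have eMG : M = (2:ℝ) • G := by
      rw [hMdef, hGdef, ← cfc_const_mul (2:ℝ) _ Λ hc_g]
      apply cfc_congr
      intro l hl
      show Real.sqrt l * (Real.sqrt (1 + l))⁻¹ = 2 * Real.sqrt (l / (4 * (1 + l)))
      have h0 := hspec l hl
      have hne := hsq1_ne l hl
      have h4 : Real.sqrt (4 * (1 + l)) = 2 * Real.sqrt (1 + l) := by
        rw [show (4:ℝ) * (1 + l) = 2 ^ 2 * (1 + l) by norm_num,
          Real.sqrt_mul (by positivity), Real.sqrt_sq (by norm_num : (0:ℝ) ≤ 2)]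
      rw [Real.sqrt_div h0, h4]
      field_simp
    intro x
    rw [eMG, ContinuousLinearMap.smul_apply]
    rw [show (2:ℝ) • G x = G x + G x from two_smul ℝ (G x),
      show (2:ℂ) • G x = G x + G x from two_smul ℂ (G x)]
  -- reformulation of the hypothesis `(u*v)* = Ju*vJ`
  have hu' : ∀ x : Hℓ2, u x = J (Au (S2 x)) := by
    intro x
    rw [← hJJ (u x), hu x]
  have hcD : ∀ a b : Hℓ2,
      ⟪Bv (J (Au (S2 a))), S1 b⟫ = ⟪Bv (J (Au (S2 b))), S1 a⟫ := by
    intro a b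
    have h : ⟪J b, ContinuousLinearMap.adjoint v (u a)⟫
        = ⟪J b, J (ContinuousLinearMap.adjoint u (v (J a)))⟫ := by rw [hc a]
    rw [ContinuousLinearMap.adjoint_inner_right, hv b, hu' a, m1] at h
    rw [hJsym (J b) (ContinuousLinearMap.adjoint u (v (J a))), hJJ b,
      ContinuousLinearMap.adjoint_inner_left, hv a, hu' b, m1] at h
    exact h
  -- the operator identity `S1 D S2 = S2 C S1`
  have hEop : ∀ a : Hℓ2,
      S1 (Bv (J (Au (S2 a)))) = S2 (Bu (J (Av (S1 a)))) := by
    intro a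
    apply ext_inner_right ℂ
    intro b
    calc ⟪S1 (Bv (J (Au (S2 a)))), b⟫
        = ⟪Bv (J (Au (S2 a))), S1 b⟫ := sa_move S1 hS1sa _ b
      _ = ⟪Bv (J (Au (S2 b))), S1 a⟫ := hcD a b
      _ = ⟪Bu (J (Av (S1 a))), S2 b⟫ := m5 (S2 b) (S1 a)
      _ = ⟪S2 (Bu (J (Av (S1 a)))), b⟫ := (sa_move S2 hS2sa _ b).symm
  -- `M D = C M` and `D M = M C`
  have hMD : ∀ x : Hℓ2, M (Bv (J (Au x))) = Bu (J (Av (M x))) := by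
    intro x
    have h := hEop (T x)
    rw [hS2T x, hS1T x] at h
    have h2 : T (S1 (Bv (J (Au x)))) = T (S2 (Bu (J (Av (M x))))) := by rw [h]
    rw [hTS1, hTS2] at h2
    exact h2
  have hDM : ∀ y : Hℓ2, Bv (J (Au (M y))) = M (Bu (J (Av y))) := by
    intro y
    have h := hMD (Bu (J (Av y)))
    rw [hDC y] at h
    have h2 : Bv (J (Au (M y)))
        = Bv (J (Au (Bu (J (Av (M (Bu (J (Av y))))))))) := by rw [← h]
    rw [hDC] at h2
    exact h2
  -- the key symmetry
  have key : ∀ s t : Hℓ2,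
      ⟪Bv (J (Au (G s))), t⟫ = ⟪Bv (J (Au (G t))), s⟫ := by
    intro s t
    apply mul_left_cancel₀ (two_ne_zero (α := ℂ))
    calc (2:ℂ) * ⟪Bv (J (Au (G s))), t⟫
        = ⟪(2:ℂ) • Bv (J (Au (G s))), t⟫ := by rw [inner_smul_left, Complex.conj_ofNat]
      _ = ⟪Bv (J (Au ((2:ℂ) • G s))), t⟫ := by rw [hDsmul2]
      _ = ⟪Bv (J (Au (M s))), t⟫ := by rw [hMG s]
      _ = ⟪M (Bu (J (Av s))), t⟫ := by rw [hDM s]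
      _ = ⟪Bu (J (Av s)), M t⟫ := sa_move M hMsa _ t
      _ = ⟪Bv (J (Au (M t))), s⟫ := (m5 (M t) s).symm
      _ = ⟪Bv (J (Au ((2:ℂ) • G t))), s⟫ := by rw [hMG t]
      _ = ⟪(2:ℂ) • Bv (J (Au (G t))), s⟫ := by rw [hDsmul2]
      _ = (2:ℂ) * ⟪Bv (J (Au (G t))), s⟫ := by rw [inner_smul_left, Complex.conj_ofNat]
  -- conclusion
  intro φ
  apply ext_inner_left ℂ
  intro ψ
  calc ⟪ψ, J (ContinuousLinearMap.adjoint O φ)⟫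
      = ⟪ContinuousLinearMap.adjoint O φ, J ψ⟫ := hJsym ψ _
    _ = ⟪φ, O (J ψ)⟫ := ContinuousLinearMap.adjoint_inner_left O (J ψ) φ
    _ = ⟪φ, -(Av (G (Bu (J ψ))))⟫ := by rw [hO (J ψ)]
    _ = -⟪φ, Av (G (Bu (J ψ)))⟫ := inner_neg_right _ _
    _ = -⟪G (Bu (J ψ)), Bv φ⟫ := by rw [m2 φ (G (Bu (J ψ)))]
    _ = -⟪Bu (J ψ), G (Bv φ)⟫ := by rw [sa_move G hGsa (Bu (J ψ)) (Bv φ)]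
    _ = -⟪Au (G (Bv φ)), J ψ⟫ := by rw [m3 (G (Bv φ)) (J ψ)]
    _ = -⟪ψ, J (Au (G (Bv φ)))⟫ := by rw [hJsym (Au (G (Bv φ))) ψ]
    _ = -⟪ψ, Av (Bv (J (Au (G (Bv φ)))))⟫ := by rw [hBv2 (J (Au (G (Bv φ))))]
    _ = -⟪Bv (J (Au (G (Bv φ)))), Bv ψ⟫ := by rw [m2 ψ (Bv (J (Au (G (Bv φ)))))]
    _ = -⟪Bv (J (Au (G (Bv ψ)))), Bv φ⟫ := by rw [key (Bv φ) (Bv ψ)]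
    _ = -⟪φ, Av (Bv (J (Au (G (Bv ψ)))))⟫ := by
        rw [m2 φ (Bv (J (Au (G (Bv ψ)))))]
    _ = -⟪φ, J (Au (G (Bv ψ)))⟫ := by rw [hBv2 (J (Au (G (Bv ψ))))]
    _ = -⟪Au (G (Bv ψ)), J φ⟫ := by rw [hJsym (Au (G (Bv ψ))) φ]
    _ = -⟪Bu (J φ), G (Bv ψ)⟫ := by rw [m3 (G (Bv ψ)) (J φ)]
    _ = -⟪G (Bu (J φ)), Bv ψ⟫ := by rw [sa_move G hGsa (Bu (J φ)) (Bv ψ)]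
    _ = -⟪ψ, Av (G (Bu (J φ)))⟫ := by rw [m2 ψ (G (Bu (J φ)))]
    _ = ⟪ψ, -(Av (G (Bu (J φ))))⟫ := (inner_neg_right _ _).symm
    _ = ⟪ψ, O (J φ)⟫ := by rw [← hO (J φ)]
end
end
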